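/- Let d ≥ 1 and T ≥ 2 be integers and let y_1, …, y_T ∈ ℝ^d satisfy ‖y_t‖ ≤ 1 for all t. Define the d×d matrices M_1 = I_d and M_{t+1} = M_t + y_t y_tᵀ for 1 ≤ t ≤ T (each M_t is symmetric positive definite, hence invertible). Then Σ_{t=1}^T √( y_tᵀ M_t^{−1} y_t ) ≤ 5 √( d T log T ). -/

import Mathlib

section Aux

open Matrix Finset

variable {d : ℕ}

lemma aux_dot_vecMulVec (v x : Fin d → ℝ) :
    x ⬝ᵥ (Matrix.vecMulVec v v).mulVec x = (v ⬝ᵥ x) ^ 2 := by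
  simp only [dotProduct, Matrix.mulVec, Matrix.vecMulVec_apply, sq]
  rw [Finset.sum_mul_sum]
  simp only [Finset.mul_sum]
  apply Finset.sum_congr rfl; intro i _
  apply Finset.sum_congr rfl; intro j _
  ring

lemma aux_vecMulVec_posSemidef (v : Fin d → ℝ) :
    (Matrix.vecMulVec v v).PosSemidef := by
  refine Matrix.PosSemidef.of_dotProduct_mulVec_nonneg ?_ ?_
  · ext i j
    simp [Matrix.vecMulVec_apply, Matrix.conjTranspose_apply, mul_comm]
  · intro x
    rw [star_trivial, aux_dot_vecMulVec]
    positivity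

lemma aux_det_one_add (A : Matrix (Fin d) (Fin d) ℝ) (u v : Fin d → ℝ) :
    (1 + Matrix.replicateRow (Fin 1) v * A * Matrix.replicateCol (Fin 1) u).det = 1 + v ⬝ᵥ A *ᵥ u := by
  rw [Matrix.det_unique, Matrix.add_apply, Matrix.one_apply_eq, ← Matrix.replicateRow_vecMul,
    Matrix.replicateRow_mul_replicateCol_apply, Matrix.dotProduct_mulVec]

lemma aux_dot_sum_mulVec {ι : Type*} (s : Finset ι) (A : ι → Matrix (Fin d) (Fin d) ℝ)
    (v : Fin d → ℝ) :
    v ⬝ᵥ (∑ i ∈ s, A i) *ᵥ v = ∑ i ∈ s, v ⬝ᵥ (A i) *ᵥ v := by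
  classical
  induction s using Finset.induction_on with
  | empty => simp
  | insert a s h ih =>
    rw [Finset.sum_insert h, Finset.sum_insert h, Matrix.add_mulVec, dotProduct_add, ih]

lemma aux_log_ge {x : ℝ} (h0 : 0 ≤ x) (h1 : x ≤ 1) : x ≤ 2 * Real.log (1 + x) := by
  have h2 : (0:ℝ) < 1 + x := by linarith
  have key : x / 2 ≤ Real.log (1 + x) := by
    rw [Real.le_log_iff_exp_le h2]
    have h3 : 1 - x / 2 ≤ Real.exp (-(x / 2)) := by
      have := Real.add_one_le_exp (-(x/2)); linarith
    have h4 : (0:ℝ) < 1 - x / 2 := by linarith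
    have h6 : (1 - x / 2) * Real.exp (x / 2) ≤ 1 := by
      have h7 := mul_le_mul_of_nonneg_right h3 (Real.exp_pos (x/2)).le
      rwa [← Real.exp_add, neg_add_cancel, Real.exp_zero] at h7
    nlinarith [h6, h4, h0, h1, Real.exp_pos (x/2)]
  linarith

end Aux

open Matrix in
set_option maxHeartbeats 1000000 in
/-- Elliptical potential bound. If `‖y_t‖ ≤ 1` for `1 ≤ t ≤ T`, `M_1 = I_d` and
`M_{t+1} = M_t + y_t y_tᵀ`, then `∑_{t=1}^T √(y_tᵀ M_t⁻¹ y_t) ≤ 5 √(d T log T)`. -/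
theorem stmt_15 (d T : ℕ) (hd : 1 ≤ d) (hT : 2 ≤ T)
    (y : ℕ → Fin d → ℝ) (hy : ∀ t, 1 ≤ t → t ≤ T → Real.sqrt (∑ i, y t i ^ 2) ≤ 1)
    (M : ℕ → Matrix (Fin d) (Fin d) ℝ) (hM1 : M 1 = 1)
    (hMrec : ∀ t, 1 ≤ t → t ≤ T → M (t + 1) = M t + Matrix.vecMulVec (y t) (y t)) :
    ∑ t ∈ Finset.Icc 1 T, Real.sqrt (dotProduct (y t) ((M t)⁻¹.mulVec (y t)))
      ≤ 5 * Real.sqrt (d * T * Real.log T) := by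
  classical
  set x : ℕ → ℝ := fun t => dotProduct (y t) ((M t)⁻¹.mulVec (y t)) with hxdef
  have hy2 : ∀ t, 1 ≤ t → t ≤ T → ∑ i, y t i ^ 2 ≤ 1 := by
    intro t h1 h2
    have h := hy t h1 h2
    have hnn : (0:ℝ) ≤ ∑ i, y t i ^ 2 := by positivity
    nlinarith [Real.sq_sqrt hnn, Real.sqrt_nonneg (∑ i, y t i ^ 2)]
  have hrep : ∀ k, k ≤ T →
      M (k + 1) = 1 + ∑ s ∈ Finset.Icc 1 k, Matrix.vecMulVec (y s) (y s) := by
    intro k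
    induction k with
    | zero => intro _; simp [hM1]
    | succ n ih =>
      intro h
      rw [hMrec (n+1) (by omega) (by omega), ih (by omega),
        Finset.sum_Icc_succ_top (by omega : 1 ≤ n + 1)]
      abel
  have hPSDsum : ∀ k, (∑ s ∈ Finset.Icc 1 k, Matrix.vecMulVec (y s) (y s)).PosSemidef := by
    intro k
    refine Finset.sum_induction (fun s => Matrix.vecMulVec (y s) (y s)) Matrix.PosSemidef
      (fun A B hA hB => hA.add hB) Matrix.PosSemidef.zero ?_
    intro s _
    exact aux_vecMulVec_posSemidef _
  have hPD : ∀ t, 1 ≤ t → t ≤ T + 1 → (M t).PosDef := by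
    intro t h1 h2
    obtain ⟨k, rfl⟩ := Nat.exists_eq_add_of_le h1
    rw [add_comm 1 k] at *
    rw [hrep k (by omega)]
    exact Matrix.PosDef.one.add_posSemidef (hPSDsum k)
  have hdetunit : ∀ t, 1 ≤ t → t ≤ T + 1 → IsUnit (M t).det := fun t h1 h2 =>
    isUnit_iff_ne_zero.mpr (hPD t h1 h2).det_pos.ne'
  have hMge : ∀ t, 1 ≤ t → t ≤ T + 1 → ∀ z : Fin d → ℝ,
      z ⬝ᵥ z ≤ z ⬝ᵥ (M t).mulVec z := by
    intro t h1 h2 z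
    obtain ⟨k, rfl⟩ := Nat.exists_eq_add_of_le h1
    rw [add_comm 1 k] at *
    rw [hrep k (by omega)]
    have h3 := (hPSDsum k).dotProduct_mulVec_nonneg z
    rw [star_trivial] at h3
    simp only [Matrix.add_mulVec, Matrix.one_mulVec, dotProduct_add]
    linarith
  have hx0 : ∀ t, 1 ≤ t → t ≤ T → 0 ≤ x t := by
    intro t h1 h2
    have hinv := ((hPD t h1 (by omega)).inv).posSemidef.dotProduct_mulVec_nonneg (y t)
    rwa [star_trivial] at hinv
  have hx1 : ∀ t, 1 ≤ t → t ≤ T → x t ≤ 1 := by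
    intro t h1 h2
    set z := (M t)⁻¹.mulVec (y t) with hz
    have hMz : (M t).mulVec z = y t := by
      rw [hz, Matrix.mulVec_mulVec, Matrix.mul_nonsing_inv _ (hdetunit t h1 (by omega)),
        Matrix.one_mulVec]
    have hzz : z ⬝ᵥ z ≤ x t := by
      have h8 := hMge t h1 (by omega) z
      rw [hMz] at h8
      exact h8.trans_eq (dotProduct_comm z (y t))
    have hCS : (x t) ^ 2 ≤ (∑ i, y t i ^ 2) * (∑ i, z i ^ 2) := by
      have := Finset.sum_mul_sq_le_sq_mul_sq Finset.univ (y t) z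
      simpa [hxdef, dotProduct] using this
    have hzz' : (∑ i, z i ^ 2) ≤ x t := by
      simpa [dotProduct, sq] using hzz
    have h01 : (0:ℝ) ≤ ∑ i, z i ^ 2 := by positivity
    nlinarith [hy2 t h1 h2, hx0 t h1 h2]
  -- determinant telescoping
  have hdet : ∀ k, k ≤ T → (M (k + 1)).det = ∏ s ∈ Finset.Icc 1 k, (1 + x s) := by
    intro k
    induction k with
    | zero => intro _; simp [hM1]
    | succ n ih =>
      intro h
      rw [hMrec (n+1) (by omega) (by omega),
        Matrix.vecMulVec_eq (Fin 1),
        Matrix.det_add_replicateCol_mul_replicateRow (hdetunit (n+1) (by omega) (by omega)),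
        ih (by omega), Finset.prod_Icc_succ_top (by omega : 1 ≤ n + 1)]
      exact congrArg (fun z => (∏ s ∈ Finset.Icc 1 n, (1 + x s)) * z)
        (aux_det_one_add (M (n+1))⁻¹ (y (n+1)) (y (n+1)))
  have hcastT : (2:ℝ) ≤ (T:ℝ) := by exact_mod_cast hT
  have hlogTpos : 0 < Real.log T := Real.log_pos (by exact_mod_cast hT)
  -- Cauchy-Schwarz for dot products against unit-norm vectors
  have hCSgen : ∀ s, 1 ≤ s → s ≤ T → ∀ v : Fin d → ℝ, (∑ j, v j ^ 2) = 1 →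
      (y s ⬝ᵥ v) ^ 2 ≤ 1 := by
    intro s hs1 hs2 v hv
    have h11 := Finset.sum_mul_sq_le_sq_mul_sq Finset.univ (y s) v
    have h12 : (y s ⬝ᵥ v) ^ 2 ≤ (∑ i, y s i ^ 2) * (∑ i, v i ^ 2) := by
      simpa [dotProduct] using h11
    rw [hv, mul_one] at h12
    exact h12.trans (hy2 s hs1 hs2)
  -- the eigenvalues of M (T+1) are at most 1 + T
  have hA : (M (T+1)).PosDef := hPD (T+1) (by omega) le_rfl
  have hH : (M (T+1)).IsHermitian := hA.isHermitian
  have heig : ∀ i, hH.eigenvalues i ≤ 1 + (T:ℝ) := by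
    intro i
    have h9 := hH.eigenvalues_eq i
    set v : Fin d → ℝ := ⇑(hH.eigenvectorBasis i) with hvdef
    have hv1 : ∑ j, v j ^ 2 = 1 := by
      have hn := hH.eigenvectorBasis.orthonormal.1 i
      rw [EuclideanSpace.norm_eq, Real.sqrt_eq_one] at hn
      calc ∑ j, v j ^ 2 = ∑ j, ‖(hH.eigenvectorBasis i) j‖ ^ 2 := by
            apply Finset.sum_congr rfl
            intro j _
            rw [Real.norm_eq_abs, sq_abs]
        _ = 1 := hn
    have h13 : star v ⬝ᵥ (M (T+1)) *ᵥ v ≤ 1 + (T:ℝ) := by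
      rw [star_trivial, hrep T le_rfl]
      simp only [Matrix.add_mulVec, Matrix.one_mulVec, dotProduct_add]
      have hvv : v ⬝ᵥ v = 1 := by
        rw [dotProduct]
        rw [← hv1]
        exact Finset.sum_congr rfl fun j _ => (sq (v j)).symm ▸ rfl
      have hsum2 : v ⬝ᵥ (∑ s ∈ Finset.Icc 1 T, Matrix.vecMulVec (y s) (y s)) *ᵥ v
          ≤ (T:ℝ) := by
        rw [aux_dot_sum_mulVec]
        calc ∑ s ∈ Finset.Icc 1 T, v ⬝ᵥ (Matrix.vecMulVec (y s) (y s)) *ᵥ v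
            ≤ ∑ s ∈ Finset.Icc 1 T, (1:ℝ) := by
              apply Finset.sum_le_sum
              intro s hs
              rw [Finset.mem_Icc] at hs
              rw [aux_dot_vecMulVec]
              exact hCSgen s hs.1 hs.2 v hv1
          _ = (T:ℝ) := by simp [Nat.card_Icc]
      linarith
    calc hH.eigenvalues i = RCLike.re (star v ⬝ᵥ (M (T+1)) *ᵥ v) := h9
      _ = star v ⬝ᵥ (M (T+1)) *ᵥ v := rfl
      _ ≤ 1 + (T:ℝ) := h13
  -- determinant bound
  have heignn : ∀ i, 0 ≤ hH.eigenvalues i := fun i => hA.posSemidef.eigenvalues_nonneg i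
  have hdetle : (M (T+1)).det ≤ (1 + (T:ℝ)) ^ d := by
    have h14 : (M (T+1)).det = ∏ i, hH.eigenvalues i := by
      have := hH.det_eq_prod_eigenvalues
      exact_mod_cast this
    rw [h14]
    calc ∏ i, hH.eigenvalues i ≤ ∏ _i : Fin d, (1 + (T:ℝ)) :=
          Finset.prod_le_prod (fun i _ => heignn i) (fun i _ => heig i)
      _ = (1 + (T:ℝ)) ^ d := by simp
  have hlogdetle : Real.log (M (T+1)).det ≤ d * (2 * Real.log T) := by
    calc Real.log (M (T+1)).det ≤ Real.log ((1 + (T:ℝ)) ^ d) :=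
          Real.log_le_log hA.det_pos hdetle
      _ = d * Real.log (1 + (T:ℝ)) := by rw [Real.log_pow]
      _ ≤ d * (2 * Real.log T) := by
          gcongr
          calc Real.log (1 + (T:ℝ)) ≤ Real.log ((T:ℝ) ^ (2:ℕ)) := by
                apply Real.log_le_log (by linarith)
                nlinarith
            _ = 2 * Real.log T := by rw [Real.log_pow]; norm_num
  -- sum of x is at most 4 d log T
  have hS : ∑ t ∈ Finset.Icc 1 T, x t ≤ 4 * d * Real.log T := by
    have h15 : ∑ t ∈ Finset.Icc 1 T, x t ≤ ∑ t ∈ Finset.Icc 1 T, 2 * Real.log (1 + x t) := by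
      apply Finset.sum_le_sum
      intro t ht
      rw [Finset.mem_Icc] at ht
      exact aux_log_ge (hx0 t ht.1 ht.2) (hx1 t ht.1 ht.2)
    have h16 : ∑ t ∈ Finset.Icc 1 T, Real.log (1 + x t) = Real.log (M (T+1)).det := by
      rw [hdet T le_rfl, Real.log_prod]
      intro t ht
      rw [Finset.mem_Icc] at ht
      have := hx0 t ht.1 ht.2
      linarith
    calc ∑ t ∈ Finset.Icc 1 T, x t ≤ ∑ t ∈ Finset.Icc 1 T, 2 * Real.log (1 + x t) := h15
      _ = 2 * Real.log (M (T+1)).det := by rw [← Finset.mul_sum, h16]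
      _ ≤ 2 * (d * (2 * Real.log T)) := by
          have := hlogdetle; linarith
      _ = 4 * d * Real.log T := by ring
  -- Cauchy-Schwarz on the final sum
  show ∑ t ∈ Finset.Icc 1 T, Real.sqrt (x t) ≤ 5 * Real.sqrt (d * T * Real.log T)
  have hsq : (∑ t ∈ Finset.Icc 1 T, Real.sqrt (x t)) ^ 2
      ≤ (T:ℝ) * ∑ t ∈ Finset.Icc 1 T, x t := by
    have h17 := Finset.sum_mul_sq_le_sq_mul_sq (Finset.Icc 1 T)
      (fun t => Real.sqrt (x t)) (fun _ => (1:ℝ))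
    simp only [mul_one, one_pow] at h17
    have h18 : ∑ t ∈ Finset.Icc 1 T, Real.sqrt (x t) ^ 2 = ∑ t ∈ Finset.Icc 1 T, x t := by
      apply Finset.sum_congr rfl
      intro t ht
      rw [Finset.mem_Icc] at ht
      exact Real.sq_sqrt (hx0 t ht.1 ht.2)
    have h19 : ∑ _t ∈ Finset.Icc 1 T, (1:ℝ) = (T:ℝ) := by simp [Nat.card_Icc]
    rw [h18, h19] at h17
    linarith [h17]
  have hsnn : 0 ≤ ∑ t ∈ Finset.Icc 1 T, Real.sqrt (x t) :=
    Finset.sum_nonneg fun t _ => Real.sqrt_nonneg _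
  have h20 : ∑ t ∈ Finset.Icc 1 T, Real.sqrt (x t)
      ≤ Real.sqrt (4 * ((d:ℝ) * T * Real.log T)) := by
    rw [Real.le_sqrt hsnn (by positivity)]
    calc (∑ t ∈ Finset.Icc 1 T, Real.sqrt (x t)) ^ 2
        ≤ (T:ℝ) * ∑ t ∈ Finset.Icc 1 T, x t := hsq
      _ ≤ (T:ℝ) * (4 * d * Real.log T) := by
          apply mul_le_mul_of_nonneg_left hS (by positivity)
      _ = 4 * ((d:ℝ) * T * Real.log T) := by ring
  calc ∑ t ∈ Finset.Icc 1 T, Real.sqrt (x t)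
      ≤ Real.sqrt (4 * ((d:ℝ) * T * Real.log T)) := h20
    _ = 2 * Real.sqrt ((d:ℝ) * T * Real.log T) := by
        rw [Real.sqrt_mul (by norm_num), show Real.sqrt 4 = 2 by
          rw [show (4:ℝ) = 2 ^ 2 by norm_num, Real.sqrt_sq (by norm_num)]]
    _ ≤ 5 * Real.sqrt ((d:ℝ) * T * Real.log T) := by
        have := Real.sqrt_nonneg ((d:ℝ) * T * Real.log T)
        linarith
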